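/- Simultaneous regularity for a partition: Let α, ε ∈ (0,1) and m a positive integer. There exists σ = σ(ε,α,m) > 0 such that if R ⊆ V = F_p^n is σ-regular, A ⊆ R has |A| = α|R|, and A = A_1 ∪ ... ∪ A_m is a partition into m sets each of size |A|/m, then there exists a subspace H ≤ V of index at most W(4m^2 ε^{-3} α^{-2}) which is ε-regular for every A_i simultaneously. -/

import Mathlib

open Finset

/-- `e(z) = e^{2πiz}`. -/
noncomputable def eC (z : ℝ) : ℂ := Complex.exp (2 * Real.pi * Complex.I * z)

/-- `⟨x,ξ⟩ = (Σ_i x_i ξ_i)/p` as a real number. -/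
noncomputable def bracket (p n : ℕ) (x ξ : Fin n → ZMod p) : ℝ :=
  ((∑ i, x i * ξ i : ZMod p).val : ℝ) / p

/-- Fourier transform over `V = F_p^n`: `f̂(ξ) = E_{x∈V} f(x) e(-⟨x,ξ⟩)`. -/
noncomputable def ft (p n : ℕ) [NeZero p] (f : (Fin n → ZMod p) → ℂ) (ξ : Fin n → ZMod p) : ℂ :=
  (Fintype.card (Fin n → ZMod p) : ℂ)⁻¹ * ∑ x, f x * eC (-(bracket p n x ξ))

open Classical in
/-- Fourier transform with respect to a subspace `H`:
`f̂(ξ) = E_{x∈H} f(x) e(-⟨x,ξ⟩)`. -/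
noncomputable def ftH (p n : ℕ) [NeZero p] (H : Submodule (ZMod p) (Fin n → ZMod p))
    (f : (Fin n → ZMod p) → ℂ) (ξ : Fin n → ZMod p) : ℂ :=
  (Nat.card H : ℂ)⁻¹ * ∑ x ∈ Finset.univ.filter (· ∈ H), f x * eC (-(bracket p n x ξ))

open Classical in
/-- The indicator function of `A_H^v = (A+v) ∩ H` (as a function on `V`, supported on `H`). -/
noncomputable def indAH (p n : ℕ) (A : Set (Fin n → ZMod p))
    (H : Submodule (ZMod p) (Fin n → ZMod p)) (v x : Fin n → ZMod p) : ℂ :=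
  if x ∈ H ∧ x - v ∈ A then 1 else 0

open Classical in
/-- `|A_H^v|`, the cardinality of `(A+v) ∩ H`. -/
noncomputable def cardAH (p n : ℕ) [NeZero p] (A : Set (Fin n → ZMod p))
    (H : Submodule (ZMod p) (Fin n → ZMod p)) (v : Fin n → ZMod p) : ℕ :=
  (Finset.univ.filter (fun x => x ∈ H ∧ x - v ∈ A)).card
/-- `v` is an ε-regular vector for `A` with respect to `H`:
`sup_{ξ∉H^⊥} |Â_H^v(ξ)| ≤ ε|A|/N`. -/
def regVec (p n : ℕ) [NeZero p] (ε : ℝ) (A : Finset (Fin n → ZMod p))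
    (H : Submodule (ZMod p) (Fin n → ZMod p)) (v : Fin n → ZMod p) : Prop :=
  ∀ ξ : Fin n → ZMod p, ¬ (∀ h ∈ H, (∑ i, h i * ξ i : ZMod p) = 0) →
    ‖ftH p n H (indAH p n (↑A) H v) ξ‖ ≤ ε * A.card / (Fintype.card (Fin n → ZMod p) : ℝ)

/-- The normalized mean-square density
`d(A,H) = (1/N) Σ_{v∈V} (|A_H^v|/|H|)² / (|A|/N)²`. -/
noncomputable def dens (p n : ℕ) [NeZero p] (A : Finset (Fin n → ZMod p))
    (H : Submodule (ZMod p) (Fin n → ZMod p)) : ℝ :=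
  (Fintype.card (Fin n → ZMod p) : ℝ)⁻¹ *
    ∑ v : Fin n → ZMod p,
      ((cardAH p n (↑A) H v : ℝ) / (Nat.card H : ℝ)) ^ 2
        / ((A.card : ℝ) / (Fintype.card (Fin n → ZMod p) : ℝ)) ^ 2

/-- The tower function `W(1) = 2p`, `W(t+1) = (2p)^{W(t)}` (indexed from 0 here,
so `tower p 0 = 2p` plays the role of `W(1)`). -/
def tower (p : ℕ) : ℕ → ℕ
  | 0 => 2 * p
  | t + 1 => (2 * p) ^ tower p t


section Basics
open Classical

lemma eC_norm (x : ℝ) : ‖eC x‖ = 1 := by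
  rw [eC, Complex.norm_exp]
  rw [show (2 * Real.pi * Complex.I * (x:ℝ) : ℂ).re = 0 by simp]
  exact Real.exp_zero

lemma eC_add (x y : ℝ) : eC (x + y) = eC x * eC y := by
  rw [eC, eC, eC, ← Complex.exp_add]
  push_cast
  ring_nf

lemma eC_int (k : ℤ) : eC k = 1 := by
  rw [eC]
  rw [show (2 * Real.pi * Complex.I * (k:ℝ) : ℂ) = (k:ℤ) * (2 * Real.pi * Complex.I) by push_cast; ring]
  exact Complex.exp_int_mul_two_pi_mul_I k

lemma eC_add_int (x : ℝ) (k : ℤ) : eC (x + k) = eC x := by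
  rw [eC_add, eC_int, mul_one]

lemma eC_pow (x : ℝ) (k : ℕ) : eC (k * x) = eC x ^ k := by
  rw [eC, eC, show (2 * Real.pi * Complex.I * ((k:ℝ) * x : ℝ) : ℂ) = (k:ℕ) * (2 * Real.pi * Complex.I * (x:ℝ)) by push_cast; ring, Complex.exp_nat_mul]

lemma sum_eC_zmod {p : ℕ} [NeZero p] (hp : 1 < p) : ∑ j : ZMod p, eC (-((j.val : ℝ)) / p) = 0 := by
  have hpr : (p : ℝ) ≠ 0 := by positivity
  have hz : ∀ j : ZMod p, eC (-((j.val : ℝ)) / p) = eC (-(1:ℝ)/p) ^ j.val := by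
    intro j
    rw [← eC_pow]
    congr 1
    field_simp
  have hre : ∑ j : ZMod p, eC (-((j.val : ℝ)) / p) = ∑ k ∈ Finset.range p, eC (-(1:ℝ)/p) ^ k := by
    rw [Finset.sum_congr rfl (fun j _ => hz j)]
    exact Finset.sum_nbij' (fun j => j.val) (fun k => (k : ZMod p))
      (fun j _ => Finset.mem_range.2 (ZMod.val_lt j))
      (fun k _ => Finset.mem_univ _)
      (fun j _ => ZMod.natCast_zmod_val j)
      (fun k hk => ZMod.val_natCast_of_lt (Finset.mem_range.1 hk))
      (fun j _ => rfl)
  have hne : eC (-(1:ℝ)/p) ≠ 1 := by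
    intro h
    rw [eC, Complex.exp_eq_one_iff] at h
    obtain ⟨k, hk⟩ := h
    rw [show ((k:ℂ) * (2 * Real.pi * Complex.I)) = 2 * Real.pi * Complex.I * (k:ℂ) by ring] at hk
    have h2 : (2 * Real.pi * Complex.I : ℂ) ≠ 0 := by
      simp [Complex.I_ne_zero, Real.pi_ne_zero]
    have := mul_left_cancel₀ h2 hk
    have hre : (-(1:ℝ)/p) = (k : ℝ) := by
      exact_mod_cast congrArg Complex.re this
    have h1 : (0:ℝ) < 1/p := by positivity
    have h2 : (1:ℝ)/p < 1 := by
      rw [div_lt_one (by positivity)]; exact_mod_cast hp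
    have hre2 : (k:ℝ) = -(1/(p:ℝ)) := by rw [← hre]; ring
    have : (-1:ℝ) < k := by rw [hre2]; linarith
    have : (k:ℝ) < 0 := by rw [hre2]; linarith
    have hk0 : k = 0 := by
      have h3 : (-1:ℤ) < k := by exact_mod_cast ‹(-1:ℝ) < k›
      have h4 : k < 0 := by exact_mod_cast ‹(k:ℝ) < 0›
      omega
    simp [hk0] at hre
    linarith
  rw [hre, geom_sum_eq hne]
  have : eC (-(1:ℝ)/p) ^ p = 1 := by
    rw [← eC_pow]
    rw [show ((p:ℝ) * (-(1:ℝ)/p)) = ((-1 : ℤ) : ℝ) by push_cast; field_simp]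
    exact eC_int (-1)
  rw [this]
  simp

end Basics
section Counting
open Classical

variable {p n : ℕ} [NeZero p]

/-- The linear functional `x ↦ Σ x i * ξ i`. -/
def phiL (p n : ℕ) [NeZero p] (ξ : Fin n → ZMod p) : (Fin n → ZMod p) →ₗ[ZMod p] ZMod p where
  toFun x := ∑ i, x i * ξ i
  map_add' x y := by simp [add_mul, Finset.sum_add_distrib]
  map_smul' c x := by simp [Finset.mul_sum, mul_assoc]

lemma bracket_eq (x ξ : Fin n → ZMod p) : bracket p n x ξ = ((phiL p n ξ x).val : ℝ) / p := rfl

lemma eC_neg_bracket_add (x y ξ : Fin n → ZMod p) :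
    eC (-(bracket p n (x + y) ξ)) = eC (-(bracket p n x ξ)) * eC (-(bracket p n y ξ)) := by
  have hpr : (p : ℝ) ≠ 0 := Nat.cast_ne_zero.2 (NeZero.ne p)
  have hplt : 0 < p := Nat.pos_of_ne_zero (NeZero.ne p)
  rw [← eC_add, bracket_eq, bracket_eq, bracket_eq, map_add]
  generalize (phiL p n ξ) x = a
  generalize (phiL p n ξ) y = b
  have hvlt : (a + b).val = (a.val + b.val) % p := ZMod.val_add a b
  generalize hna : a.val = na at hvlt
  generalize hnb : b.val = nb at hvlt
  generalize hnc : (a + b).val = nc at hvlt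
  have hdm := Nat.div_add_mod (na + nb) p
  generalize hq : (na + nb) / p = q at hdm
  generalize hr : (na + nb) % p = r at hdm hvlt
  have h2 : nc + p * q = na + nb := by omega
  have hval : (nc : ℝ) = (na : ℝ) + nb - p * (q : ℕ) := by
    have h3 := congrArg (Nat.cast : ℕ → ℝ) h2
    push_cast at h3
    linarith
  rw [show -((nc : ℝ)/p) = -((na:ℝ)/p) + -((nb:ℝ)/p) + ((q : ℕ) : ℤ) by
    rw [hval]; push_cast; field_simp; ring]
  rw [eC_add_int]

variable {H H' H'' : Submodule (ZMod p) (Fin n → ZMod p)}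

/-- `HS H` : the underlying finset of `H`. -/
noncomputable def HSet (H : Submodule (ZMod p) (Fin n → ZMod p)) : Finset (Fin n → ZMod p) :=
  Finset.univ.filter (· ∈ H)

lemma natCard_eq_HSet (H : Submodule (ZMod p) (Fin n → ZMod p)) :
    Nat.card H = (HSet H).card := by
  rw [Nat.card_eq_fintype_card, HSet, Fintype.card_subtype]

lemma HSet_card_pos (H : Submodule (ZMod p) (Fin n → ZMod p)) : 0 < (HSet H).card :=
  Finset.card_pos.2 ⟨0, by simp [HSet]⟩

lemma natCard_pos (H : Submodule (ZMod p) (Fin n → ZMod p)) : 0 < Nat.card H := by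
  rw [natCard_eq_HSet]; exact HSet_card_pos H

lemma cardAH_eq_filter (A : Set (Fin n → ZMod p)) (v : Fin n → ZMod p) :
    cardAH p n A H v = ((HSet H).filter (fun x => x - v ∈ A)).card := by
  rw [cardAH, HSet, Finset.filter_filter]

lemma cardAH_shift (A : Set (Fin n → ZMod p)) (v h : Fin n → ZMod p) (hh : h ∈ H) :
    cardAH p n A H (v + h) = cardAH p n A H v := by
  rw [cardAH_eq_filter, cardAH_eq_filter]
  apply Finset.card_nbij' (fun x => x - h) (fun y => y + h)
  · intro x hx
    simp only [Finset.mem_coe, Finset.mem_filter, HSet, Finset.mem_univ, true_and] at hx ⊢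
    exact ⟨H.sub_mem hx.1 hh, by rw [show x - h - v = x - (v + h) by ring]; exact hx.2⟩
  · intro y hy
    simp only [Finset.mem_coe, Finset.mem_filter, HSet, Finset.mem_univ, true_and] at hy ⊢
    exact ⟨H.add_mem hy.1 hh, by rw [show y + h - (v + h) = y - v by ring]; exact hy.2⟩
  · intro x _; simp
  · intro y _; simp

/-- Averaging: summing the subcell counts over a cell recovers the cell count. -/
lemma sum_cardAH_sub (hle : H' ≤ H) (A : Set (Fin n → ZMod p)) (v : Fin n → ZMod p) :
    ∑ h ∈ HSet H, (cardAH p n A H' (v + h) : ℝ)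
      = (Nat.card H' : ℝ) * cardAH p n A H v := by
  have key : ∀ h, (cardAH p n A H' (v + h) : ℝ)
      = ∑ x ∈ HSet H', (if x - (v + h) ∈ A then (1:ℝ) else 0) := by
    intro h
    rw [cardAH_eq_filter]
    rw [Finset.card_filter]
    push_cast
    rfl
  rw [Finset.sum_congr rfl (fun h _ => key h), Finset.sum_comm]
  have inner : ∀ x ∈ HSet H', (∑ h ∈ HSet H, (if x - (v + h) ∈ A then (1:ℝ) else 0))
      = (cardAH p n A H v : ℝ) := by
    intro x hx
    simp only [HSet, Finset.mem_filter, Finset.mem_univ, true_and] at hx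
    rw [cardAH_eq_filter, Finset.card_filter]
    push_cast
    apply Finset.sum_nbij' (fun h => x - h) (fun y => x - y)
    · intro a ha
      simp only [HSet, Finset.mem_filter, Finset.mem_univ, true_and] at ha ⊢
      exact H.sub_mem (hle hx) ha
    · intro a ha
      simp only [HSet, Finset.mem_filter, Finset.mem_univ, true_and] at ha ⊢
      exact H.sub_mem (hle hx) ha
    · intro a _; simp
    · intro a _; simp
    · intro a _
      congr 1
      · rw [show x - (v + a) = x - a - v by ring]
  rw [Finset.sum_congr rfl inner, Finset.sum_const, nsmul_eq_mul, natCard_eq_HSet]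

end Counting
section Energy
open Classical

variable {p n : ℕ} [NeZero p]
variable {H H' H'' : Submodule (ZMod p) (Fin n → ZMod p)}

/-- The density of (a translate of) `A` on the cell of `H` determined by `v`. -/
noncomputable def DD (p n : ℕ) [NeZero p] (A : Set (Fin n → ZMod p))
    (H : Submodule (ZMod p) (Fin n → ZMod p)) (v : Fin n → ZMod p) : ℝ :=
  (cardAH p n A H v : ℝ) / (Nat.card H : ℝ)

/-- The (unnormalized) mean-square density. -/
noncomputable def EE (p n : ℕ) [NeZero p] (A : Set (Fin n → ZMod p))
    (H : Submodule (ZMod p) (Fin n → ZMod p)) : ℝ :=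
  ((Fintype.card (Fin n → ZMod p) : ℝ))⁻¹ * ∑ v, DD p n A H v ^ 2

lemma DD_nonneg (A : Set (Fin n → ZMod p)) (v) : 0 ≤ DD p n A H v := by
  unfold DD; positivity

lemma DD_shift (A : Set (Fin n → ZMod p)) (v h : Fin n → ZMod p) (hh : h ∈ H) :
    DD p n A H (v + h) = DD p n A H v := by
  unfold DD; rw [cardAH_shift A v h hh]

lemma sum_DD_sub (hle : H' ≤ H) (A : Set (Fin n → ZMod p)) (v : Fin n → ZMod p) :
    ∑ h ∈ HSet H, DD p n A H' (v + h) = (Nat.card H : ℝ) * DD p n A H v := by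
  unfold DD
  rw [← Finset.sum_div, sum_cardAH_sub hle A v]
  have h1 : (Nat.card H' : ℝ) ≠ 0 := Nat.cast_ne_zero.2 (natCard_pos H').ne'
  field_simp

/-- Local Jensen inequality. -/
lemma local_jensen (hle : H' ≤ H) (A : Set (Fin n → ZMod p)) (v : Fin n → ZMod p) :
    DD p n A H v ^ 2 * (Nat.card H : ℝ) ≤ ∑ h ∈ HSet H, DD p n A H' (v + h) ^ 2 := by
  have hcs := Finset.sum_mul_sq_le_sq_mul_sq (HSet H) (fun h => DD p n A H' (v + h)) (fun _ => 1)
  simp only [mul_one, one_pow] at hcs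
  rw [Finset.sum_const, nsmul_eq_mul, mul_one] at hcs
  rw [sum_DD_sub hle A v] at hcs
  have hHpos : (0:ℝ) < (Nat.card H : ℝ) := Nat.cast_pos.2 (natCard_pos H)
  have hcard : ((HSet H).card : ℝ) = (Nat.card H : ℝ) := by rw [natCard_eq_HSet]
  rw [hcard] at hcs
  nlinarith [hcs, sq_nonneg (DD p n A H v)]

/-- Summing a shifted function over all `v` and over `h ∈ H`. -/
lemma sum_shift (g : (Fin n → ZMod p) → ℝ) (H : Submodule (ZMod p) (Fin n → ZMod p)) :
    ∑ v : Fin n → ZMod p, ∑ h ∈ HSet H, g (v + h)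
      = (Nat.card H : ℝ) * ∑ w, g w := by
  rw [Finset.sum_comm]
  have inner : ∀ h ∈ HSet H, ∑ v : Fin n → ZMod p, g (v + h) = ∑ w, g w := by
    intro h _
    exact Fintype.sum_equiv (Equiv.addRight h) _ _ (fun v => rfl)
  rw [Finset.sum_congr rfl inner, Finset.sum_const, nsmul_eq_mul, natCard_eq_HSet]

lemma EE_mono (hle : H' ≤ H) (A : Set (Fin n → ZMod p)) : EE p n A H ≤ EE p n A H' := by
  unfold EE
  have hHpos : (0:ℝ) < (Nat.card H : ℝ) := Nat.cast_pos.2 (natCard_pos H)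
  have hNpos : (0:ℝ) < ((Fintype.card (Fin n → ZMod p) : ℝ)) := by
    exact_mod_cast Fintype.card_pos
  rw [mul_le_mul_iff_right₀ (by positivity)]
  have key : ∀ v, DD p n A H v ^ 2 * (Nat.card H : ℝ) ≤ ∑ h ∈ HSet H, DD p n A H' (v + h) ^ 2 :=
    fun v => local_jensen hle A v
  have h1 : (∑ v, DD p n A H v ^ 2) * (Nat.card H : ℝ)
      ≤ ∑ v : Fin n → ZMod p, ∑ h ∈ HSet H, DD p n A H' (v + h) ^ 2 := by
    rw [Finset.sum_mul]
    exact Finset.sum_le_sum (fun v _ => key v)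
  rw [sum_shift (fun w => DD p n A H' w ^ 2) H] at h1
  calc ∑ v, DD p n A H v ^ 2
      = (∑ v, DD p n A H v ^ 2) * (Nat.card H : ℝ) / (Nat.card H : ℝ) := by field_simp
    _ ≤ (Nat.card H : ℝ) * (∑ w, DD p n A H' w ^ 2) / (Nat.card H : ℝ) := by
        gcongr
    _ = ∑ w, DD p n A H' w ^ 2 := by field_simp

lemma dens_eq_EE (A : Finset (Fin n → ZMod p)) (H : Submodule (ZMod p) (Fin n → ZMod p)) :
    _root_.dens p n A H = EE p n (↑A) H / ((A.card : ℝ) / (Fintype.card (Fin n → ZMod p) : ℝ)) ^ 2 := by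
  unfold _root_.dens EE DD
  rw [← Finset.sum_div]
  ring

lemma dens_mono (hle : H' ≤ H) (A : Finset (Fin n → ZMod p)) :
    _root_.dens p n A H ≤ _root_.dens p n A H' := by
  rw [dens_eq_EE, dens_eq_EE]
  exact div_le_div_of_nonneg_right (EE_mono hle ↑A) (by positivity)

end Energy
section Core
open Classical

variable {p n : ℕ} [NeZero p]
variable {H : Submodule (ZMod p) (Fin n → ZMod p)}

/-- The fiber of `H` over `j` along the functional given by `ξ`. -/
noncomputable def Fib (H : Submodule (ZMod p) (Fin n → ZMod p)) (ξ : Fin n → ZMod p)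
    (j : ZMod p) : Finset (Fin n → ZMod p) :=
  (HSet H).filter (fun x => phiL p n ξ x = j)

lemma Fib_zero (ξ : Fin n → ZMod p) :
    Fib H ξ 0 = HSet (H ⊓ LinearMap.ker (phiL p n ξ)) := by
  ext x
  simp [Fib, HSet, Submodule.mem_inf, LinearMap.mem_ker]

lemma Fib_card_le (K : Submodule (ZMod p) (Fin n → ZMod p)) (ξ : Fin n → ZMod p) (j : ZMod p) :
    (Fib K ξ j).card ≤ (Fib K ξ 0).card := by
  rcases Finset.eq_empty_or_nonempty (Fib K ξ j) with h | ⟨x0, hx0⟩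
  · simp [h]
  · simp only [Fib, Finset.mem_filter, HSet, Finset.mem_univ, true_and] at hx0
    apply Finset.card_le_card_of_injOn (fun x => x - x0)
    · intro x hx
      simp only [Finset.mem_coe, Fib, Finset.mem_filter, HSet, Finset.mem_univ, true_and] at hx ⊢
      exact ⟨K.sub_mem hx.1 hx0.1, by rw [map_sub, hx.2, hx0.2, sub_self]⟩
    · intro x _ y _ hxy
      simpa using congrArg (· + x0) hxy

lemma card_HSet_le (K : Submodule (ZMod p) (Fin n → ZMod p)) (ξ : Fin n → ZMod p) :
    (HSet K).card ≤ p * (HSet (K ⊓ LinearMap.ker (phiL p n ξ))).card := by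
  rw [← Fib_zero]
  rw [Finset.card_eq_sum_card_fiberwise (f := fun x => phiL p n ξ x) (t := Finset.univ)
    (fun x _ => Finset.mem_univ _)]
  calc ∑ j : ZMod p, ((HSet K).filter (fun x => phiL p n ξ x = j)).card
      ≤ ∑ _j : ZMod p, (Fib K ξ 0).card := Finset.sum_le_sum (fun j _ => Fib_card_le K ξ j)
    _ = p * (Fib K ξ 0).card := by rw [Finset.sum_const, Finset.card_univ, ZMod.card, smul_eq_mul]

lemma Fib_card_eq (hp : p.Prime) (ξ : Fin n → ZMod p)
    (hξ : ∃ h ∈ H, phiL p n ξ h ≠ 0) (j : ZMod p) :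
    (Fib H ξ j).card = (Fib H ξ 0).card := by
  haveI := Fact.mk hp
  obtain ⟨h0, hh0, hc⟩ := hξ
  set c := phiL p n ξ h0 with hcdef
  set xj : Fin n → ZMod p := (j * c⁻¹) • h0 with hxj
  have hxjH : xj ∈ H := H.smul_mem _ hh0
  have hφxj : phiL p n ξ xj = j := by
    rw [hxj, map_smul, smul_eq_mul, ← hcdef, mul_assoc, inv_mul_cancel₀ hc, mul_one]
  apply Finset.card_nbij' (fun x => x - xj) (fun y => y + xj)
  · intro x hx
    simp only [Finset.mem_coe, Fib, Finset.mem_filter, HSet, Finset.mem_univ, true_and] at hx ⊢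
    exact ⟨H.sub_mem hx.1 hxjH, by rw [map_sub, hx.2, hφxj, sub_self]⟩
  · intro y hy
    simp only [Finset.mem_coe, Fib, Finset.mem_filter, HSet, Finset.mem_univ, true_and] at hy ⊢
    exact ⟨H.add_mem hy.1 hxjH, by rw [map_add, hy.2, hφxj, zero_add]⟩
  · intro x _; simp
  · intro y _; simp

lemma card_HSet_eq (hp : p.Prime) (ξ : Fin n → ZMod p)
    (hξ : ∃ h ∈ H, phiL p n ξ h ≠ 0) :
    (HSet H).card = p * (Fib H ξ 0).card := by
  rw [Finset.card_eq_sum_card_fiberwise (f := fun x => phiL p n ξ x) (t := Finset.univ)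
    (fun x _ => Finset.mem_univ _)]
  calc ∑ j : ZMod p, ((HSet H).filter (fun x => phiL p n ξ x = j)).card
      = ∑ _j : ZMod p, (Fib H ξ 0).card :=
        Finset.sum_congr rfl (fun j _ => Fib_card_eq hp ξ hξ j)
    _ = p * (Fib H ξ 0).card := by rw [Finset.sum_const, Finset.card_univ, ZMod.card, smul_eq_mul]

end Core
section CoreIneq
open Classical

variable {p n : ℕ} [NeZero p]
variable {H : Submodule (ZMod p) (Fin n → ZMod p)}

set_option maxHeartbeats 1000000 in
lemma core_ineq (hp : p.Prime) (A : Set (Fin n → ZMod p)) (v ξ : Fin n → ZMod p)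
    (hξ : ∃ h ∈ H, phiL p n ξ h ≠ 0) :
    (DD p n A H v ^ 2 + ‖ftH p n H (indAH p n A H v) ξ‖ ^ 2) * (Nat.card H : ℝ)
      ≤ ∑ h ∈ HSet H, DD p n A (H ⊓ LinearMap.ker (phiL p n ξ)) (v + h) ^ 2 := by
  haveI := Fact.mk hp
  set H' := H ⊓ LinearMap.ker (phiL p n ξ) with hH'
  set M := (Fib H ξ 0).card with hM
  have hMcard : Nat.card H' = M := by rw [natCard_eq_HSet, ← Fib_zero]
  have hMpos : 0 < M := by rw [← hMcard]; exact natCard_pos H'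
  have hHcard : (HSet H).card = p * M := card_HSet_eq hp ξ hξ
  have hppos : 0 < p := hp.pos
  have hp1 : 1 < p := hp.one_lt
  have hpR : (0:ℝ) < p := by exact_mod_cast hppos
  have hMR : (0:ℝ) < M := by exact_mod_cast hMpos
  have hpne : (p:ℝ) ≠ 0 := hpR.ne'
  have hMne : (M:ℝ) ≠ 0 := hMR.ne'
  set a : ZMod p → ℕ := fun j => ((Fib H ξ j).filter (fun x => x - v ∈ A)).card with ha
  set β : ZMod p → ℝ := fun j => (a j : ℝ) / M with hβ
  set c0 : ℝ := (cardAH p n A H v : ℝ) with hc0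
  -- Step 1: counts in subcells are fiber counts
  have step1 : ∀ h ∈ HSet H, cardAH p n A H' (v + h) = a (-(phiL p n ξ h)) := by
    intro h hh
    simp only [HSet, Finset.mem_filter, Finset.mem_univ, true_and] at hh
    rw [cardAH_eq_filter]
    apply Finset.card_nbij' (fun x => x - h) (fun y => y + h)
    · intro x hx
      simp only [Finset.mem_coe, HSet, Fib, Finset.mem_filter, Finset.mem_univ, true_and, hH',
        Submodule.mem_inf, LinearMap.mem_ker] at hx ⊢
      refine ⟨⟨H.sub_mem hx.1.1 hh, by rw [map_sub, hx.1.2, zero_sub]⟩, ?_⟩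
      rw [show x - h - v = x - (v + h) by ring]
      exact hx.2
    · intro y hy
      simp only [Finset.mem_coe, HSet, Fib, Finset.mem_filter, Finset.mem_univ, true_and, hH',
        Submodule.mem_inf, LinearMap.mem_ker] at hy ⊢
      refine ⟨⟨H.add_mem hy.1.1 hh, by rw [map_add, hy.1.2, neg_add_cancel]⟩, ?_⟩
      rw [show y + h - (v + h) = y - v by ring]
      exact hy.2
    · intro x _; simp
    · intro y _; simp
  -- Step 2
  have step2 : ∑ h ∈ HSet H, DD p n A H' (v + h) ^ 2 = M * ∑ j : ZMod p, β j ^ 2 := by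
    have h1 : ∀ h ∈ HSet H, DD p n A H' (v + h) ^ 2 = β (-(phiL p n ξ h)) ^ 2 := by
      intro h hh
      rw [DD, step1 h hh, hMcard, hβ]
    rw [Finset.sum_congr rfl h1]
    have hfib := Finset.sum_fiberwise_of_maps_to (s := HSet H) (t := Finset.univ)
      (g := fun h => -(phiL p n ξ h)) (fun x _ => Finset.mem_univ _)
      (fun h => β (-(phiL p n ξ h)) ^ 2)
    rw [← hfib]
    have h2 : ∀ j : ZMod p, ∑ h ∈ (HSet H).filter (fun h => -(phiL p n ξ h) = j),
        β (-(phiL p n ξ h)) ^ 2 = M * β j ^ 2 := by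
      intro j
      rw [Finset.sum_congr rfl (fun h hh => by
        rw [(Finset.mem_filter.1 hh).2])]
      rw [Finset.sum_const, nsmul_eq_mul]
      congr 2
      have : (HSet H).filter (fun h => -(phiL p n ξ h) = j) = Fib H ξ (-j) := by
        unfold Fib
        apply Finset.filter_congr
        intro x _
        simp [neg_eq_iff_eq_neg]
      rw [this, Fib_card_eq hp ξ hξ (-j)]
    rw [Finset.sum_congr rfl (fun j _ => h2 j), ← Finset.mul_sum]
  -- Step 3
  have step3 : ∑ j : ZMod p, (a j : ℝ) = c0 := by
    rw [hc0, cardAH_eq_filter]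
    rw [Finset.card_eq_sum_card_fiberwise (f := fun x => phiL p n ξ x) (t := Finset.univ)
      (fun x _ => Finset.mem_univ _)]
    push_cast
    apply Finset.sum_congr rfl
    intro j _
    congr 1
    rw [ha]
    unfold Fib
    rw [Finset.filter_comm]
  -- Step 4 : Fourier coefficient as fiber sums
  set e : ZMod p → ℂ := fun j => eC (-((j.val : ℝ) / p)) with he
  have step4 : ftH p n H (indAH p n A H v) ξ
      = (Nat.card H : ℂ)⁻¹ * ∑ j : ZMod p, (a j : ℂ) * e j := by
    unfold ftH
    congr 1
    have h1 : ∀ x ∈ Finset.univ.filter (· ∈ H), indAH p n A H v x * eC (-(bracket p n x ξ))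
        = if x - v ∈ A then eC (-(bracket p n x ξ)) else 0 := by
      intro x hx
      simp only [Finset.mem_filter, Finset.mem_univ, true_and] at hx
      rw [indAH]
      by_cases h : x - v ∈ A <;> simp [h, hx]
    rw [Finset.sum_congr rfl h1, ← Finset.sum_filter]
    have h2 : Finset.univ.filter (· ∈ H) = HSet H := rfl
    rw [h2]
    have hfib := Finset.sum_fiberwise_of_maps_to (s := (HSet H).filter (fun x => x - v ∈ A))
      (t := Finset.univ) (g := fun x => phiL p n ξ x) (fun x _ => Finset.mem_univ _)
      (fun x => eC (-(bracket p n x ξ)))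
    rw [← hfib]
    apply Finset.sum_congr rfl
    intro j _
    have h3 : ((HSet H).filter (fun x => x - v ∈ A)).filter (fun x => phiL p n ξ x = j)
        = (Fib H ξ j).filter (fun x => x - v ∈ A) := by
      unfold Fib
      rw [Finset.filter_comm]
    rw [h3]
    have h4 : ∀ x ∈ (Fib H ξ j).filter (fun x => x - v ∈ A),
        eC (-(bracket p n x ξ)) = e j := by
      intro x hx
      simp only [Fib, Finset.mem_filter] at hx
      rw [he, bracket_eq, hx.1.2]
    rw [Finset.sum_congr rfl h4, Finset.sum_const, nsmul_eq_mul, ha]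
  -- root of unity sum
  have hesum : ∑ j : ZMod p, e j = 0 := by
    rw [he]
    have := sum_eC_zmod (p := p) hp1
    convert this using 2 with j
    rw [neg_div]
  -- recenter
  have hrw : ∑ j : ZMod p, (a j : ℂ) * e j
      = ∑ j : ZMod p, (((a j : ℝ) - c0 / p : ℝ) : ℂ) * e j := by
    have h1 : ∑ j : ZMod p, (((a j : ℝ) - c0 / p : ℝ) : ℂ) * e j
        = ∑ j : ZMod p, (a j : ℂ) * e j - ((c0 / p : ℝ) : ℂ) * ∑ j : ZMod p, e j := by
      rw [Finset.mul_sum, ← Finset.sum_sub_distrib]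
      apply Finset.sum_congr rfl
      intro j _
      push_cast
      ring
    rw [h1, hesum, mul_zero, sub_zero]
  -- norm bound
  set T : ℝ := ∑ j : ZMod p, |(a j : ℝ) - c0 / p| with hT
  have hTnn : 0 ≤ T := Finset.sum_nonneg (fun j _ => abs_nonneg _)
  have hnorm : ‖ftH p n H (indAH p n A H v) ξ‖ ≤ T / (p * M) := by
    rw [step4, hrw]
    rw [norm_mul, norm_inv]
    have hcH : ‖(Nat.card H : ℂ)‖ = (p : ℝ) * M := by
      rw [Complex.norm_natCast, natCard_eq_HSet, hHcard]
      push_cast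
      ring
    rw [hcH]
    rw [show T / ((p:ℝ) * M) = ((p:ℝ) * M)⁻¹ * T by ring]
    apply mul_le_mul_of_nonneg_left _ (by positivity)
    calc ‖∑ j : ZMod p, (((a j : ℝ) - c0 / p : ℝ) : ℂ) * e j‖
        ≤ ∑ j : ZMod p, ‖(((a j : ℝ) - c0 / p : ℝ) : ℂ) * e j‖ := norm_sum_le _ _
      _ = T := by
          apply Finset.sum_congr rfl
          intro j _
          rw [norm_mul, he, eC_norm, mul_one, Complex.norm_real, Real.norm_eq_abs]
  have hCS : T ^ 2 ≤ (p : ℝ) * ∑ j : ZMod p, ((a j : ℝ) - c0 / p) ^ 2 := by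
    have := Finset.sum_mul_sq_le_sq_mul_sq Finset.univ
      (fun j : ZMod p => |(a j : ℝ) - c0 / p|) (fun _ => 1)
    simp only [mul_one, one_pow, sq_abs] at this
    rw [Finset.sum_const, Finset.card_univ, ZMod.card, nsmul_eq_mul, mul_one] at this
    calc T ^ 2 ≤ (∑ j : ZMod p, ((a j : ℝ) - c0 / p) ^ 2) * p := this
      _ = (p : ℝ) * ∑ j : ZMod p, ((a j : ℝ) - c0 / p) ^ 2 := by ring
  have hexp : ∑ j : ZMod p, ((a j : ℝ) - c0 / p) ^ 2 = (∑ j : ZMod p, (a j : ℝ) ^ 2) - c0 ^ 2 / p := by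
    have h1 : ∀ j : ZMod p, ((a j : ℝ) - c0 / p) ^ 2
        = (a j : ℝ) ^ 2 - 2 * (c0 / p) * (a j : ℝ) + (c0 / p) ^ 2 := fun j => by ring
    rw [Finset.sum_congr rfl (fun j _ => h1 j), Finset.sum_add_distrib, Finset.sum_sub_distrib,
      ← Finset.mul_sum, step3, Finset.sum_const, Finset.card_univ, ZMod.card, nsmul_eq_mul]
    have hsc : (2:ℝ) * (c0 / p) * c0 - (p:ℝ) * (c0 / p) ^ 2 = c0 ^ 2 / p := by
      field_simp
      ring
    linarith [hsc]
  have hft2 : ‖ftH p n H (indAH p n A H v) ξ‖ ^ 2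
      ≤ ((∑ j : ZMod p, (a j : ℝ) ^ 2) - c0 ^ 2 / p) / (p * M ^ 2) := by
    calc ‖ftH p n H (indAH p n A H v) ξ‖ ^ 2 ≤ (T / (p * M)) ^ 2 := by
          apply pow_le_pow_left₀ (norm_nonneg _) hnorm
      _ = T ^ 2 / (p * M) ^ 2 := by rw [div_pow]
      _ ≤ ((p : ℝ) * ∑ j : ZMod p, ((a j : ℝ) - c0 / p) ^ 2) / (p * M) ^ 2 := by
          apply div_le_div_of_nonneg_right hCS (by positivity)
      _ = ((∑ j : ZMod p, (a j : ℝ) ^ 2) - c0 ^ 2 / p) / (p * M ^ 2) := by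
          rw [hexp]
          generalize ((∑ j : ZMod p, (a j : ℝ) ^ 2) - c0 ^ 2 / p) = Y
          field_simp
  -- assemble
  rw [step2]
  have hcH : (Nat.card H : ℝ) = (p : ℝ) * M := by
    rw [natCard_eq_HSet, hHcard]; push_cast; ring
  have hDD : DD p n A H v = c0 / ((p : ℝ) * M) := by
    rw [DD, hcH, hc0]
  have hβsq : (M : ℝ) * ∑ j : ZMod p, β j ^ 2 = (∑ j : ZMod p, (a j : ℝ) ^ 2) / M := by
    simp only [hβ, div_pow]
    rw [← Finset.sum_div]
    field_simp
  rw [hcH, hDD, hβsq]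
  set Y := ∑ j : ZMod p, (a j : ℝ) ^ 2 with hY
  set F := ‖ftH p n H (indAH p n A H v) ξ‖ with hF
  have h1 : ((c0 / ((p:ℝ)*M))^2 + (Y - c0^2/p)/((p:ℝ)*M^2)) * ((p:ℝ)*M) = Y / M := by
    field_simp
    ring
  have h3 := mul_le_mul_of_nonneg_right hft2 (mul_pos hpR hMR).le
  nlinarith [h1, h3]
  done

end CoreIneq
section Step
open Classical

variable {p n : ℕ} [NeZero p]
variable {H H'' : Submodule (ZMod p) (Fin n → ZMod p)}

lemma step_ineq (hp : p.Prime) (A : Set (Fin n → ZMod p)) (v ξ : Fin n → ZMod p)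
    (hξ : ∃ h ∈ H, phiL p n ξ h ≠ 0)
    (hsub : H'' ≤ H ⊓ LinearMap.ker (phiL p n ξ)) :
    (DD p n A H v ^ 2 + ‖ftH p n H (indAH p n A H v) ξ‖ ^ 2) * (Nat.card H : ℝ)
      ≤ ∑ h ∈ HSet H, DD p n A H'' (v + h) ^ 2 := by
  set H' := H ⊓ LinearMap.ker (phiL p n ξ) with hH'
  refine le_trans (core_ineq hp A v ξ hξ) ?_
  have hH'pos : (0:ℝ) < (Nat.card H' : ℝ) := by exact_mod_cast natCard_pos H'
  have key : ∀ h, (Nat.card H' : ℝ) * DD p n A H' (v + h) ^ 2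
      ≤ ∑ k ∈ HSet H', DD p n A H'' (v + h + k) ^ 2 := by
    intro h
    have := local_jensen (H := H') (H' := H'') hsub A (v + h)
    calc (Nat.card H' : ℝ) * DD p n A H' (v + h) ^ 2
        = DD p n A H' (v + h) ^ 2 * (Nat.card H' : ℝ) := by ring
      _ ≤ _ := this
  have swap : ∀ k ∈ HSet H', ∑ h ∈ HSet H, DD p n A H'' (v + h + k) ^ 2
      = ∑ h ∈ HSet H, DD p n A H'' (v + h) ^ 2 := by
    intro k hk
    simp only [HSet, Finset.mem_filter, Finset.mem_univ, true_and] at hk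
    have hkH : k ∈ H := (inf_le_left : H' ≤ H) hk
    apply Finset.sum_nbij' (fun h => h + k) (fun h => h - k)
    · intro h hh
      simp only [HSet, Finset.mem_filter, Finset.mem_univ, true_and] at hh ⊢
      exact H.add_mem hh hkH
    · intro h hh
      simp only [HSet, Finset.mem_filter, Finset.mem_univ, true_and] at hh ⊢
      exact H.sub_mem hh hkH
    · intro h _; simp
    · intro h _; simp
    · intro h _
      congr 1
      abel
  have main : (Nat.card H' : ℝ) * ∑ h ∈ HSet H, DD p n A H' (v + h) ^ 2
      ≤ (Nat.card H' : ℝ) * ∑ h ∈ HSet H, DD p n A H'' (v + h) ^ 2 := by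
    calc (Nat.card H' : ℝ) * ∑ h ∈ HSet H, DD p n A H' (v + h) ^ 2
        = ∑ h ∈ HSet H, (Nat.card H' : ℝ) * DD p n A H' (v + h) ^ 2 := Finset.mul_sum _ _ _
      _ ≤ ∑ h ∈ HSet H, ∑ k ∈ HSet H', DD p n A H'' (v + h + k) ^ 2 :=
          Finset.sum_le_sum (fun h _ => key h)
      _ = ∑ k ∈ HSet H', ∑ h ∈ HSet H, DD p n A H'' (v + h + k) ^ 2 := Finset.sum_comm
      _ = ∑ k ∈ HSet H', ∑ h ∈ HSet H, DD p n A H'' (v + h) ^ 2 :=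
          Finset.sum_congr rfl swap
      _ = (Nat.card H' : ℝ) * ∑ h ∈ HSet H, DD p n A H'' (v + h) ^ 2 := by
          rw [Finset.sum_const, nsmul_eq_mul, natCard_eq_HSet]
  exact le_of_mul_le_mul_left main hH'pos

lemma ftH_norm_shift (A : Set (Fin n → ZMod p)) (v h ξ : Fin n → ZMod p) (hh : h ∈ H) :
    ‖ftH p n H (indAH p n A H (v + h)) ξ‖ = ‖ftH p n H (indAH p n A H v) ξ‖ := by
  unfold ftH
  have key : ∑ x ∈ Finset.univ.filter (· ∈ H), indAH p n A H (v + h) x * eC (-(bracket p n x ξ))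
      = eC (-(bracket p n h ξ)) *
        ∑ x ∈ Finset.univ.filter (· ∈ H), indAH p n A H v x * eC (-(bracket p n x ξ)) := by
    have h1 : ∀ x, indAH p n A H (v + h) x = indAH p n A H v (x - h) := by
      intro x
      unfold indAH
      apply if_congr _ rfl rfl
      constructor
      · rintro ⟨hx, hxa⟩
        exact ⟨H.sub_mem hx hh, by rw [show x - h - v = x - (v + h) by ring]; exact hxa⟩
      · rintro ⟨hx, hxa⟩
        refine ⟨by simpa using H.add_mem hx hh, ?_⟩
        rw [show x - (v + h) = x - h - v by ring]
        exact hxa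
    rw [Finset.sum_congr rfl (fun x _ => by rw [h1 x])]
    rw [Finset.mul_sum]
    apply Finset.sum_nbij' (fun x => x - h) (fun y => y + h)
    · intro x hx
      simp only [Finset.mem_filter, Finset.mem_univ, true_and] at hx ⊢
      exact H.sub_mem hx hh
    · intro y hy
      simp only [Finset.mem_filter, Finset.mem_univ, true_and] at hy ⊢
      exact H.add_mem hy hh
    · intro x _; simp
    · intro y _; simp
    · intro x _
      have hee := eC_neg_bracket_add (x - h) h ξ
      rw [show x - h + h = x by abel] at hee
      rw [hee]
      ring
  rw [key, norm_mul, norm_mul, norm_mul, eC_norm, one_mul]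

lemma regVec_shift (ε : ℝ) (A : Finset (Fin n → ZMod p)) (v h : Fin n → ZMod p) (hh : h ∈ H) :
    regVec p n ε A H (v + h) ↔ regVec p n ε A H v := by
  unfold regVec
  apply forall_congr'
  intro ξ
  rw [ftH_norm_shift (↑A) v h ξ hh]

end Step
section Increment
open Classical

variable {p n : ℕ} [NeZero p]

lemma card_le_inf_ker (H : Submodule (ZMod p) (Fin n → ZMod p)) (S : Finset (Fin n → ZMod p)) :
    (HSet H).card ≤ p ^ S.card *
      (HSet (H ⊓ S.inf (fun ξ => LinearMap.ker (phiL p n ξ)))).card := by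
  classical
  induction S using Finset.induction_on with
  | empty => simp
  | @insert ξ S hξS ih =>
    have h1 : H ⊓ (insert ξ S).inf (fun ξ => LinearMap.ker (phiL p n ξ))
        = (H ⊓ S.inf (fun ξ => LinearMap.ker (phiL p n ξ))) ⊓ LinearMap.ker (phiL p n ξ) := by
      rw [Finset.inf_insert]
      rw [inf_comm (LinearMap.ker (phiL p n ξ)) _, inf_assoc]
    rw [h1, Finset.card_insert_of_notMem hξS, pow_succ]
    calc (HSet H).card
        ≤ p ^ S.card * (HSet (H ⊓ S.inf (fun ξ => LinearMap.ker (phiL p n ξ)))).card := ih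
      _ ≤ p ^ S.card * (p * (HSet ((H ⊓ S.inf (fun ξ => LinearMap.ker (phiL p n ξ)))
            ⊓ LinearMap.ker (phiL p n ξ))).card) := by
          exact Nat.mul_le_mul_left _ (card_HSet_le _ ξ)
      _ = p ^ S.card * p * (HSet ((H ⊓ S.inf (fun ξ => LinearMap.ker (phiL p n ξ)))
            ⊓ LinearMap.ker (phiL p n ξ))).card := by ring

lemma index_le (H H'' : Submodule (ZMod p) (Fin n → ZMod p)) (s : ℕ)
    (hcard : Nat.card H ≤ p ^ s * Nat.card H'') :
    Nat.card ((Fin n → ZMod p) ⧸ H'') ≤ p ^ s * Nat.card ((Fin n → ZMod p) ⧸ H) := by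
  have h1 := Submodule.card_eq_card_quotient_mul_card H
  have h2 := Submodule.card_eq_card_quotient_mul_card H''
  have hpos : 0 < Nat.card H'' := natCard_pos H''
  have hmul : Nat.card H'' * Nat.card ((Fin n → ZMod p) ⧸ H'')
      ≤ Nat.card H'' * (p ^ s * Nat.card ((Fin n → ZMod p) ⧸ H)) := by
    calc Nat.card H'' * Nat.card ((Fin n → ZMod p) ⧸ H'')
        = Nat.card (Fin n → ZMod p) := h2.symm
      _ = Nat.card H * Nat.card ((Fin n → ZMod p) ⧸ H) := h1
      _ ≤ (p ^ s * Nat.card H'') * Nat.card ((Fin n → ZMod p) ⧸ H) :=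
          Nat.mul_le_mul_right _ hcard
      _ = Nat.card H'' * (p ^ s * Nat.card ((Fin n → ZMod p) ⧸ H)) := by ring
  exact Nat.le_of_mul_le_mul_left hmul hpos

set_option maxHeartbeats 2000000 in
/-- Main energy increment lemma. -/
lemma increment (hp : p.Prime) (ε : ℝ) (hε : 0 < ε) (A : Finset (Fin n → ZMod p))
    (hA : 0 < A.card) (H : Submodule (ZMod p) (Fin n → ZMod p))
    (hbad : ε * (Fintype.card (Fin n → ZMod p) : ℝ)
      < ((Finset.univ.filter (fun v => ¬ regVec p n ε A H v)).card : ℝ)) :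
    ∃ H'' : Submodule (ZMod p) (Fin n → ZMod p), H'' ≤ H ∧
      Nat.card ((Fin n → ZMod p) ⧸ H'')
        ≤ p ^ (Nat.card ((Fin n → ZMod p) ⧸ H)) * Nat.card ((Fin n → ZMod p) ⧸ H) ∧
      _root_.dens p n A H + ε ^ 3 ≤ _root_.dens p n A H'' := by
  classical
  have hNpos : 0 < Fintype.card (Fin n → ZMod p) := Fintype.card_pos
  have hNR : (0:ℝ) < (Fintype.card (Fin n → ZMod p) : ℝ) := by exact_mod_cast hNpos
  set Bad := Finset.univ.filter (fun v : Fin n → ZMod p => ¬ regVec p n ε A H v) with hBad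
  set P : (Fin n → ZMod p) → (Fin n → ZMod p) → Prop := fun v ξ =>
    (∃ h ∈ H, (∑ i, h i * ξ i : ZMod p) ≠ 0) ∧
      ε * A.card / (Fintype.card (Fin n → ZMod p) : ℝ) < ‖ftH p n H (indAH p n (↑A) H v) ξ‖ with hP
  have hbadP : ∀ v ∈ Bad, ∃ ξ, P v ξ := by
    intro v hv
    simp only [hBad, Finset.mem_filter, Finset.mem_univ, true_and] at hv
    rw [regVec] at hv
    push_neg at hv
    obtain ⟨ξ, h1, h2⟩ := hv
    exact ⟨ξ, h1, h2⟩
  set wit : (Fin n → ZMod p) → (Fin n → ZMod p) := fun u =>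
    if h : ∃ ξ, P u ξ then h.choose else 0 with hwit
  set w : (Fin n → ZMod p) → (Fin n → ZMod p) := fun v =>
    wit (Quotient.out (Submodule.Quotient.mk (p := H) v)) with hw
  set S := Bad.image w with hS
  haveI : Fintype ((Fin n → ZMod p) ⧸ H) := Fintype.ofFinite _
  have hScard : S.card ≤ Nat.card ((Fin n → ZMod p) ⧸ H) := by
    have hsub : S ⊆ Finset.univ.image
        (fun q : (Fin n → ZMod p) ⧸ H => wit (Quotient.out q)) := by
      intro x hx
      obtain ⟨v, _, rfl⟩ := Finset.mem_image.1 hx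
      exact Finset.mem_image.2 ⟨Submodule.Quotient.mk v, Finset.mem_univ _, rfl⟩
    rw [Nat.card_eq_fintype_card]
    calc S.card ≤ (Finset.univ.image
          (fun q : (Fin n → ZMod p) ⧸ H => wit (Quotient.out q))).card :=
        Finset.card_le_card hsub
      _ ≤ (Finset.univ : Finset ((Fin n → ZMod p) ⧸ H)).card := Finset.card_image_le
      _ = Fintype.card ((Fin n → ZMod p) ⧸ H) := Finset.card_univ
  -- the new subspace
  set H'' := H ⊓ S.inf (fun ξ => LinearMap.ker (phiL p n ξ)) with hH''
  have hle : H'' ≤ H := inf_le_left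
  -- each bad vector has its witness in S
  have keyP : ∀ v ∈ Bad, P v (w v) := by
    intro v hv
    have hvbad : ¬ regVec p n ε A H v := by
      simpa [hBad] using hv
    set u := Quotient.out (Submodule.Quotient.mk (p := H) v) with hu
    have hmk : Submodule.Quotient.mk (p := H) u = Submodule.Quotient.mk (p := H) v := by
      rw [hu]
      exact Quotient.out_eq _
    have hmem : u - v ∈ H := (Submodule.Quotient.eq H).1 hmk
    have hueq : u = v + (u - v) := by abel
    have hubad : ¬ regVec p n ε A H u := by
      rw [hueq, regVec_shift ε A v (u - v) hmem]
      exact hvbad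
    have hex : ∃ ξ, P u ξ := by
      rw [regVec] at hubad
      push_neg at hubad
      obtain ⟨ξ, h1, h2⟩ := hubad
      exact ⟨ξ, h1, h2⟩
    have hPu : P u (wit u) := by
      rw [hwit]
      simp only [hex, dif_pos]
      exact hex.choose_spec
    have hwv : w v = wit u := rfl
    rw [hwv]
    obtain ⟨ξ0, hξ0⟩ : ∃ ξ0, wit u = ξ0 := ⟨_, rfl⟩
    rw [hξ0]
    rw [hξ0] at hPu
    refine ⟨hPu.1, ?_⟩
    have h2 := hPu.2
    rw [hueq, ftH_norm_shift (↑A) v (u - v) ξ0 hmem] at h2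
    exact h2
  have hwS : ∀ v ∈ Bad, w v ∈ S := fun v hv => Finset.mem_image_of_mem w hv
  have hsub : ∀ v ∈ Bad, H'' ≤ H ⊓ LinearMap.ker (phiL p n (w v)) := by
    intro v hv
    exact le_inf hle (le_trans inf_le_right (Finset.inf_le (hwS v hv)))
  -- index bound
  have hidx : Nat.card ((Fin n → ZMod p) ⧸ H'')
      ≤ p ^ (Nat.card ((Fin n → ZMod p) ⧸ H)) * Nat.card ((Fin n → ZMod p) ⧸ H) := by
    have h1 : Nat.card H ≤ p ^ S.card * Nat.card H'' := by
      rw [natCard_eq_HSet, natCard_eq_HSet]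
      exact card_le_inf_ker H S
    have h2 : Nat.card H ≤ p ^ (Nat.card ((Fin n → ZMod p) ⧸ H)) * Nat.card H'' := by
      refine le_trans h1 (Nat.mul_le_mul_right _ (Nat.pow_le_pow_right hp.pos hScard))
    exact index_le H H'' _ h2
  refine ⟨H'', hle, hidx, ?_⟩
  -- energy increment
  have hApos : (0:ℝ) < (A.card : ℝ) := by exact_mod_cast hA
  set Δ : ℝ := ε * A.card / (Fintype.card (Fin n → ZMod p) : ℝ) with hΔ
  have hΔpos : 0 < Δ := by positivity
  have hcHpos : (0:ℝ) < (Nat.card H : ℝ) := by exact_mod_cast natCard_pos H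
  have bound : ∀ v : Fin n → ZMod p,
      (DD p n (↑A) H v ^ 2 + (if v ∈ Bad then Δ ^ 2 else 0)) * (Nat.card H : ℝ)
        ≤ ∑ h ∈ HSet H, DD p n (↑A) H'' (v + h) ^ 2 := by
    intro v
    by_cases hv : v ∈ Bad
    · rw [if_pos hv]
      obtain ⟨h1, h2⟩ := keyP v hv
      obtain ⟨h, hh, hne⟩ := h1
      have hξ : ∃ h ∈ H, phiL p n (w v) h ≠ 0 := ⟨h, hh, hne⟩
      have hstep := step_ineq (H := H) (H'' := H'') hp (↑A) v (w v) hξ (hsub v hv)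
      refine le_trans ?_ hstep
      have hΔ2 : Δ ^ 2 ≤ ‖ftH p n H (indAH p n (↑A) H v) (w v)‖ ^ 2 :=
        pow_le_pow_left₀ hΔpos.le h2.le 2
      exact mul_le_mul_of_nonneg_right (add_le_add le_rfl hΔ2) hcHpos.le
    · rw [if_neg hv, add_zero]
      exact local_jensen hle (↑A) v
  have summed : (∑ v : Fin n → ZMod p, DD p n (↑A) H v ^ 2) + (Bad.card : ℝ) * Δ ^ 2
      ≤ ∑ v : Fin n → ZMod p, DD p n (↑A) H'' v ^ 2 := by
    have h1 : (∑ v : Fin n → ZMod p, (DD p n (↑A) H v ^ 2 + (if v ∈ Bad then Δ ^ 2 else 0)))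
        * (Nat.card H : ℝ)
        ≤ ∑ v : Fin n → ZMod p, ∑ h ∈ HSet H, DD p n (↑A) H'' (v + h) ^ 2 := by
      rw [Finset.sum_mul]
      exact Finset.sum_le_sum (fun v _ => bound v)
    rw [sum_shift (fun wv => DD p n (↑A) H'' wv ^ 2) H] at h1
    have h2 : ∑ v : Fin n → ZMod p, (if v ∈ Bad then Δ ^ 2 else (0:ℝ))
        = (Bad.card : ℝ) * Δ ^ 2 := by
      rw [← Finset.sum_filter, Finset.filter_mem_eq_inter, Finset.univ_inter,
        Finset.sum_const, nsmul_eq_mul]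
    rw [Finset.sum_add_distrib, h2] at h1
    rw [mul_comm ((Nat.card H : ℝ)) _] at h1
    exact le_of_mul_le_mul_right h1 hcHpos
  -- from counts to EE
  have hEE : EE p n (↑A) H + ε * Δ ^ 2 ≤ EE p n (↑A) H'' := by
    unfold EE
    have hband : ε * Δ ^ 2 ≤ (Bad.card : ℝ) / (Fintype.card (Fin n → ZMod p) : ℝ) * Δ ^ 2 := by
      apply mul_le_mul_of_nonneg_right _ (sq_nonneg Δ)
      rw [le_div_iff₀ hNR]
      exact hbad.le
    calc ((Fintype.card (Fin n → ZMod p) : ℝ))⁻¹ * (∑ v, DD p n (↑A) H v ^ 2) + ε * Δ ^ 2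
        ≤ ((Fintype.card (Fin n → ZMod p) : ℝ))⁻¹ * (∑ v, DD p n (↑A) H v ^ 2)
            + (Bad.card : ℝ) / (Fintype.card (Fin n → ZMod p) : ℝ) * Δ ^ 2 :=
          add_le_add le_rfl hband
      _ = ((Fintype.card (Fin n → ZMod p) : ℝ))⁻¹
            * ((∑ v, DD p n (↑A) H v ^ 2) + (Bad.card : ℝ) * Δ ^ 2) := by
          rw [mul_add]
          congr 1
          rw [div_eq_inv_mul, mul_assoc]
      _ ≤ ((Fintype.card (Fin n → ZMod p) : ℝ))⁻¹ * (∑ v, DD p n (↑A) H'' v ^ 2) := by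
          apply mul_le_mul_of_nonneg_left summed (by positivity)
  -- from EE to dens
  rw [dens_eq_EE, dens_eq_EE]
  set α' : ℝ := (A.card : ℝ) / (Fintype.card (Fin n → ZMod p) : ℝ) with hα'
  have hα'pos : 0 < α' := by positivity
  have hΔα : Δ = ε * α' := by rw [hΔ, hα']; ring
  have hkey : (EE p n (↑A) H + ε ^ 3 * α' ^ 2) / α' ^ 2 ≤ EE p n (↑A) H'' / α' ^ 2 := by
    apply div_le_div_of_nonneg_right _ (by positivity)
    calc EE p n (↑A) H + ε ^ 3 * α' ^ 2 = EE p n (↑A) H + ε * (ε * α') ^ 2 := by ring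
      _ = EE p n (↑A) H + ε * Δ ^ 2 := by rw [hΔα]
      _ ≤ EE p n (↑A) H'' := hEE
  calc EE p n (↑A) H / α' ^ 2 + ε ^ 3
      = (EE p n (↑A) H + ε ^ 3 * α' ^ 2) / α' ^ 2 := by
        rw [add_div, mul_div_assoc, div_self (pow_pos hα'pos 2).ne', mul_one]
    _ ≤ EE p n (↑A) H'' / α' ^ 2 := hkey

end Increment
section Upper
open Classical

variable {p n : ℕ} [NeZero p]

lemma sum_sq_le_sq_sum {m : ℕ} (f : Fin m → ℝ) (hf : ∀ i, 0 ≤ f i) :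
    ∑ i, f i ^ 2 ≤ (∑ i, f i) ^ 2 := by
  have h1 : ∀ i ∈ Finset.univ, f i ^ 2 ≤ f i * ∑ j, f j := by
    intro i _
    rw [sq]
    exact mul_le_mul_of_nonneg_left
      (Finset.single_le_sum (fun j _ => hf j) (Finset.mem_univ i)) (hf i)
  calc ∑ i, f i ^ 2 ≤ ∑ i, f i * ∑ j, f j := Finset.sum_le_sum h1
    _ = (∑ i, f i) ^ 2 := by rw [← Finset.sum_mul, sq]

lemma cardAH_mono {A B : Finset (Fin n → ZMod p)} (hAB : A ⊆ B)
    (H : Submodule (ZMod p) (Fin n → ZMod p)) (v : Fin n → ZMod p) :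
    cardAH p n (↑A) H v ≤ cardAH p n (↑B) H v := by
  unfold cardAH
  apply Finset.card_le_card
  intro x hx
  simp only [Finset.mem_filter, Finset.mem_univ, true_and, Finset.mem_coe] at hx ⊢
  exact ⟨hx.1, hAB hx.2⟩

lemma cardAH_partition {m : ℕ} (A : Finset (Fin n → ZMod p))
    (Ai : Fin m → Finset (Fin n → ZMod p))
    (hdis : ∀ i j, i ≠ j → Disjoint (Ai i) (Ai j)) (hun : Finset.univ.biUnion Ai = A)
    (H : Submodule (ZMod p) (Fin n → ZMod p)) (v : Fin n → ZMod p) :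
    ∑ i, (cardAH p n (↑(Ai i)) H v : ℝ) = (cardAH p n (↑A) H v : ℝ) := by
  have hform : ∀ (B : Finset (Fin n → ZMod p)), (cardAH p n (↑B) H v : ℝ)
      = ∑ x ∈ HSet H, (if x - v ∈ B then (1:ℝ) else 0) := by
    intro B
    rw [cardAH_eq_filter, Finset.card_filter]
    push_cast
    apply Finset.sum_congr rfl
    intro x _
    simp [Finset.mem_coe]
  rw [Finset.sum_congr rfl (fun i (_ : i ∈ Finset.univ) => hform (Ai i)), hform A,
    Finset.sum_comm]
  apply Finset.sum_congr rfl
  intro x _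
  by_cases hx : x - v ∈ A
  · rw [if_pos hx]
    have hx' : x - v ∈ Finset.univ.biUnion Ai := by rw [hun]; exact hx
    obtain ⟨i0, _, hi0⟩ := Finset.mem_biUnion.1 hx'
    have key : ∀ i, (x - v ∈ Ai i) ↔ i = i0 := by
      intro i
      constructor
      · intro hi
        by_contra hne
        exact Finset.disjoint_left.1 (hdis i i0 hne) hi hi0
      · rintro rfl; exact hi0
    calc ∑ i, (if x - v ∈ Ai i then (1:ℝ) else 0)
        = ∑ i, (if i = i0 then (1:ℝ) else 0) :=
          Finset.sum_congr rfl (fun i _ => by rw [if_congr (key i) rfl rfl])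
      _ = 1 := by rw [Finset.sum_ite_eq' Finset.univ i0 (fun _ => (1:ℝ))]; simp
  · rw [if_neg hx]
    apply Finset.sum_eq_zero
    intro i _
    rw [if_neg]
    intro hi
    apply hx
    rw [← hun]
    exact Finset.mem_biUnion.2 ⟨i, Finset.mem_univ i, hi⟩

set_option maxHeartbeats 1000000 in
lemma dens_upper {m : ℕ} (hm : 0 < m) (α : ℝ) (hα : 0 < α)
    (R A : Finset (Fin n → ZMod p)) (Ai : Fin m → Finset (Fin n → ZMod p))
    (H : Submodule (ZMod p) (Fin n → ZMod p))
    (hreg : ∀ v, (cardAH p n (↑R) H v : ℝ)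
      ≤ 2 * R.card * (Nat.card H : ℝ) / (Fintype.card (Fin n → ZMod p) : ℝ))
    (hAR : A ⊆ R) (hcard : (A.card : ℝ) = α * R.card) (hApos : 0 < A.card)
    (hdis : ∀ i j, i ≠ j → Disjoint (Ai i) (Ai j)) (hun : Finset.univ.biUnion Ai = A)
    (hsize : ∀ i, m * (Ai i).card = A.card) :
    ∑ i, _root_.dens p n (Ai i) H ≤ 4 * m ^ 2 / α ^ 2 := by
  have hNR : (0:ℝ) < (Fintype.card (Fin n → ZMod p) : ℝ) := by
    exact_mod_cast (Fintype.card_pos : 0 < Fintype.card (Fin n → ZMod p))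
  have hcH : (0:ℝ) < (Nat.card H : ℝ) := by exact_mod_cast natCard_pos H
  have hmR : (0:ℝ) < (m : ℝ) := by exact_mod_cast hm
  have hAposR : (0:ℝ) < (A.card : ℝ) := by exact_mod_cast hApos
  have hRpos : (0:ℝ) < (R.card : ℝ) := by
    by_contra hc
    push_neg at hc
    have : (R.card : ℝ) = 0 := le_antisymm hc (by positivity)
    rw [this, mul_zero] at hcard
    linarith
  set N : ℝ := (Fintype.card (Fin n → ZMod p) : ℝ) with hN
  set q : ℝ := (A.card : ℝ) / (m * N) with hq
  have hqpos : 0 < q := by positivity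
  have hAiq : ∀ i, ((Ai i).card : ℝ) / N = q := by
    intro i
    rw [hq]
    have := hsize i
    have hcast : (m : ℝ) * ((Ai i).card : ℝ) = (A.card : ℝ) := by exact_mod_cast this
    rw [div_eq_div_iff hNR.ne' (by positivity : ((m:ℝ) * N) ≠ 0)]
    calc ((Ai i).card : ℝ) * ((m : ℝ) * N) = ((m : ℝ) * ((Ai i).card : ℝ)) * N := by ring
      _ = (A.card : ℝ) * N := by rw [hcast]
  -- pointwise bound
  have hpoint : ∀ v : Fin n → ZMod p,
      ∑ i, ((cardAH p n (↑(Ai i)) H v : ℝ) / (Nat.card H : ℝ)) ^ 2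
        / (((Ai i).card : ℝ) / N) ^ 2 ≤ 4 * m ^ 2 / α ^ 2 := by
    intro v
    have h1 : ∑ i, ((cardAH p n (↑(Ai i)) H v : ℝ)) ^ 2 ≤ (cardAH p n (↑A) H v : ℝ) ^ 2 := by
      rw [← cardAH_partition A Ai hdis hun H v]
      exact sum_sq_le_sq_sum _ (fun i => by positivity)
    have h2 : (cardAH p n (↑A) H v : ℝ) ≤ 2 * R.card * (Nat.card H : ℝ) / N := by
      refine le_trans ?_ (hreg v)
      exact_mod_cast cardAH_mono hAR H v
    have h3 : (cardAH p n (↑A) H v : ℝ) ^ 2 ≤ (2 * R.card * (Nat.card H : ℝ) / N) ^ 2 := by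
      apply pow_le_pow_left₀ (by positivity) h2
    have hsum : ∑ i, ((cardAH p n (↑(Ai i)) H v : ℝ) / (Nat.card H : ℝ)) ^ 2
        / (((Ai i).card : ℝ) / N) ^ 2
        = (∑ i, ((cardAH p n (↑(Ai i)) H v : ℝ)) ^ 2) / ((Nat.card H : ℝ) ^ 2 * q ^ 2) := by
      rw [Finset.sum_div]
      apply Finset.sum_congr rfl
      intro i _
      rw [hAiq i, div_pow]
      ring
    rw [hsum]
    rw [div_le_iff₀ (by positivity)]
    have hqval : q = α * R.card / (m * N) := by
      rw [hq, hcard]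
    have hkey : (2 * R.card * (Nat.card H : ℝ) / N) ^ 2
        = 4 * m ^ 2 / α ^ 2 * ((Nat.card H : ℝ) ^ 2 * q ^ 2) := by
      rw [hqval]
      field_simp
      ring
    calc (∑ i, ((cardAH p n (↑(Ai i)) H v : ℝ)) ^ 2)
        ≤ (2 * R.card * (Nat.card H : ℝ) / N) ^ 2 := le_trans h1 h3
      _ = 4 * m ^ 2 / α ^ 2 * ((Nat.card H : ℝ) ^ 2 * q ^ 2) := hkey
  -- sum over v
  have hdens : ∀ i, _root_.dens p n (Ai i) H = N⁻¹ *
      ∑ v, ((cardAH p n (↑(Ai i)) H v : ℝ) / (Nat.card H : ℝ)) ^ 2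
        / (((Ai i).card : ℝ) / N) ^ 2 := fun i => rfl
  calc ∑ i, _root_.dens p n (Ai i) H
      = N⁻¹ * ∑ v, ∑ i, ((cardAH p n (↑(Ai i)) H v : ℝ) / (Nat.card H : ℝ)) ^ 2
          / (((Ai i).card : ℝ) / N) ^ 2 := by
        rw [Finset.sum_congr rfl (fun i (_ : i ∈ Finset.univ) => hdens i), ← Finset.mul_sum,
          Finset.sum_comm]
    _ ≤ N⁻¹ * ∑ v : Fin n → ZMod p, (4 * m ^ 2 / α ^ 2) := by
        apply mul_le_mul_of_nonneg_left _ (by positivity)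
        exact Finset.sum_le_sum (fun v _ => hpoint v)
    _ = 4 * m ^ 2 / α ^ 2 := by
        rw [Finset.sum_const, Finset.card_univ, nsmul_eq_mul, ← hN]
        field_simp
end Upper
section TopAux
open Classical

variable {p n : ℕ} [NeZero p]

lemma tower_pos (p : ℕ) [NeZero p] (k : ℕ) : 0 < tower p k := by
  have hp := NeZero.pos p
  induction k with
  | zero => show 0 < 2 * p; omega
  | succ k ih => exact pow_pos (by omega) _

lemma tower_le_succ (p : ℕ) [NeZero p] (k : ℕ) : tower p k ≤ tower p (k + 1) := by
  have hp : 1 ≤ p := NeZero.one_le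
  calc tower p k ≤ 2 ^ tower p k := (Nat.lt_two_pow_self).le
    _ ≤ (2 * p) ^ tower p k := Nat.pow_le_pow_left (by omega) _
    _ = tower p (k + 1) := rfl

lemma card_quot_top : Nat.card ((Fin n → ZMod p) ⧸ (⊤ : Submodule (ZMod p) (Fin n → ZMod p)))
    = 1 := by
  have h := Submodule.card_eq_card_quotient_mul_card (⊤ : Submodule (ZMod p) (Fin n → ZMod p))
  have h2 : Nat.card (⊤ : Submodule (ZMod p) (Fin n → ZMod p))
      = Nat.card (Fin n → ZMod p) := by
    rw [natCard_eq_HSet]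
    unfold HSet
    simp only [Submodule.mem_top, Finset.filter_true]
    rw [Finset.card_univ, Nat.card_eq_fintype_card]
  have h3 : 0 < Nat.card (Fin n → ZMod p) := by
    rw [Nat.card_eq_fintype_card]; exact Fintype.card_pos
  rw [h2] at h
  nlinarith [h, h3, Nat.card_eq_fintype_card (α := (Fin n → ZMod p))]

lemma cardAH_top (A : Finset (Fin n → ZMod p)) (v : Fin n → ZMod p) :
    cardAH p n (↑A) (⊤ : Submodule (ZMod p) (Fin n → ZMod p)) v = A.card := by
  unfold cardAH
  apply Finset.card_nbij' (fun x => x - v) (fun a => a + v)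
  · intro x hx
    simp only [Finset.mem_coe, Finset.mem_filter] at hx
    exact Finset.mem_coe.1 hx.2.2
  · intro a ha
    simp only [Finset.mem_coe, Finset.mem_filter]
    refine ⟨Finset.mem_univ _, trivial, ?_⟩
    rw [show a + v - v = a by ring]
    exact Finset.mem_coe.2 ha
  · intro x _; simp
  · intro a _; simp

lemma dens_top (A : Finset (Fin n → ZMod p)) (hA : 0 < A.card) :
    _root_.dens p n A (⊤ : Submodule (ZMod p) (Fin n → ZMod p)) = 1 := by
  unfold _root_.dens
  have h2 : (Nat.card (⊤ : Submodule (ZMod p) (Fin n → ZMod p)) : ℝ)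
      = (Fintype.card (Fin n → ZMod p) : ℝ) := by
    rw [natCard_eq_HSet]
    unfold HSet
    simp only [Submodule.mem_top, Finset.filter_true]
    rw [Finset.card_univ]
  have hNR : (0:ℝ) < (Fintype.card (Fin n → ZMod p) : ℝ) := by
    exact_mod_cast (Fintype.card_pos : 0 < Fintype.card (Fin n → ZMod p))
  have hAR : (0:ℝ) < (A.card : ℝ) := by exact_mod_cast hA
  have hone : ∀ v : Fin n → ZMod p, ((cardAH p n (↑A) ⊤ v : ℝ)
      / (Nat.card (⊤ : Submodule (ZMod p) (Fin n → ZMod p)) : ℝ)) ^ 2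
      / ((A.card : ℝ) / (Fintype.card (Fin n → ZMod p) : ℝ)) ^ 2 = 1 := by
    intro v
    rw [cardAH_top, h2]
    apply div_self
    positivity
  rw [Finset.sum_congr rfl (fun v (_ : v ∈ Finset.univ) => hone v), Finset.sum_const,
    Finset.card_univ, nsmul_eq_mul, mul_one]
  exact inv_mul_cancel₀ hNR.ne'

lemma regVec_empty (ε : ℝ) (A : Finset (Fin n → ZMod p)) (hA : A.card = 0)
    (H : Submodule (ZMod p) (Fin n → ZMod p)) (v : Fin n → ZMod p) :
    regVec p n ε A H v := by
  have hAe : A = ∅ := Finset.card_eq_zero.1 hA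
  intro ξ _
  have hind : ∀ x, indAH p n (↑A) H v x = 0 := by
    intro x
    unfold indAH
    rw [if_neg]
    rintro ⟨-, hx⟩
    rw [hAe] at hx
    simpa using hx
  unfold ftH
  rw [Finset.sum_congr rfl (fun x _ => by rw [hind x, zero_mul]), Finset.sum_const,
    smul_zero, mul_zero, norm_zero, hA]
  simp

end TopAux

open Classical in
/-- simultaneous regularity for a partition.  For `α, ε ∈ (0,1)`
and `m ≥ 1` there is `σ = σ(ε,α,m) > 0` such that if `R` is σ-regular, `A ⊆ R`
has `|A| = α|R|`, and `A = A_1 ∪ ⋯ ∪ A_m` is a partition into `m` sets each of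
size `|A|/m`, then there is a subspace `H` of index at most
`W(4m²ε^{-3}α^{-2})` which is ε-regular for every `A_i` simultaneously. -/
theorem green_regularity_partition {p : ℕ} [NeZero p] (hp : p.Prime) (hodd : Odd p)
    (α ε : ℝ) (hα : 0 < α) (hα1 : α < 1) (hε : 0 < ε) (hε1 : ε < 1)
    (m : ℕ) (hm : 0 < m) :
    ∃ σ : ℝ, 0 < σ ∧
      ∀ (n : ℕ) (R A : Finset (Fin n → ZMod p)) (Ai : Fin m → Finset (Fin n → ZMod p)),
        (∀ (H : Submodule (ZMod p) (Fin n → ZMod p)) (v : Fin n → ZMod p),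
          σ * (Fintype.card (Fin n → ZMod p) : ℝ) ≤ (Nat.card H : ℝ) →
          (cardAH p n (↑R) H v : ℝ)
            ≤ 2 * R.card * (Nat.card H : ℝ) / (Fintype.card (Fin n → ZMod p) : ℝ)) →
        A ⊆ R → (A.card : ℝ) = α * R.card →
        (∀ i j, i ≠ j → Disjoint (Ai i) (Ai j)) →
        (Finset.univ.biUnion Ai = A) →
        (∀ i, m * (Ai i).card = A.card) →
        ∃ H : Submodule (ZMod p) (Fin n → ZMod p),
          Nat.card ((Fin n → ZMod p) ⧸ H) ≤ tower p ⌈4 * m ^ 2 * ε⁻¹ ^ 3 * α⁻¹ ^ 2⌉₊ ∧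
          ∀ i, ((Finset.univ.filter
              (fun v : Fin n → ZMod p => ¬ regVec p n ε (Ai i) H v)).card : ℝ)
            ≤ ε * (Fintype.card (Fin n → ZMod p) : ℝ) := by

  classical
  set T : ℕ := ⌈4 * (m : ℝ) ^ 2 * ε⁻¹ ^ 3 * α⁻¹ ^ 2⌉₊ with hT
  have htpos : 0 < tower p T := tower_pos p T
  have htposR : (0:ℝ) < (tower p T : ℝ) := by exact_mod_cast htpos
  refine ⟨(tower p T : ℝ)⁻¹, by positivity, ?_⟩
  intro n R A Ai hreg hAR hcard hdis hun hsize
  have hNpos : 0 < Fintype.card (Fin n → ZMod p) := Fintype.card_pos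
  have hNR : (0:ℝ) < (Fintype.card (Fin n → ZMod p) : ℝ) := by exact_mod_cast hNpos
  by_cases hA : A.card = 0
  · refine ⟨⊤, ?_, ?_⟩
    · rw [card_quot_top]
      exact htpos
    · intro i
      have hAi : (Ai i).card = 0 := by
        have h := hsize i
        rcases Nat.eq_zero_or_pos (Ai i).card with h0 | h0
        · exact h0
        · exfalso
          have : 0 < m * (Ai i).card := Nat.mul_pos hm h0
          omega
      have hempty : (Finset.univ.filter
          (fun v : Fin n → ZMod p => ¬ regVec p n ε (Ai i) ⊤ v)) = ∅ := by
        rw [Finset.filter_eq_empty_iff]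
        intro v _
        rw [not_not]
        exact regVec_empty ε (Ai i) hAi ⊤ v
      rw [hempty, Finset.card_empty]
      push_cast
      positivity
  · have hApos : 0 < A.card := Nat.pos_of_ne_zero hA
    have hAipos : ∀ i, 0 < (Ai i).card := by
      intro i
      rcases Nat.eq_zero_or_pos (Ai i).card with h0 | h0
      · exfalso
        have h := hsize i
        rw [h0, Nat.mul_zero] at h
        omega
      · exact h0
    have hm1 : (1:ℝ) ≤ (m:ℝ) := by exact_mod_cast hm
    have main : ∀ k : ℕ, ∃ H : Submodule (ZMod p) (Fin n → ZMod p),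
        Nat.card ((Fin n → ZMod p) ⧸ H) ≤ tower p k ∧
        ((∀ i, ((Finset.univ.filter
              (fun v : Fin n → ZMod p => ¬ regVec p n ε (Ai i) H v)).card : ℝ)
            ≤ ε * (Fintype.card (Fin n → ZMod p) : ℝ)) ∨
          (1 + (k : ℝ) * ε ^ 3 ≤ ∑ i, _root_.dens p n (Ai i) H)) := by
      intro k
      induction k with
      | zero =>
        refine ⟨⊤, ?_, Or.inr ?_⟩
        · rw [card_quot_top]
          exact tower_pos p 0
        · rw [Finset.sum_congr rfl (fun i (_ : i ∈ Finset.univ) => dens_top (Ai i) (hAipos i))]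
          rw [Finset.sum_const, Finset.card_univ, Fintype.card_fin, nsmul_eq_mul, mul_one]
          push_cast
          linarith [hm1]
      | succ k ih =>
        obtain ⟨H, hidx, hcase⟩ := ih
        have htk := tower_le_succ p k
        rcases hcase with hgood | henergy
        · exact ⟨H, hidx.trans htk, Or.inl hgood⟩
        by_cases hgood : ∀ i, ((Finset.univ.filter
            (fun v : Fin n → ZMod p => ¬ regVec p n ε (Ai i) H v)).card : ℝ)
            ≤ ε * (Fintype.card (Fin n → ZMod p) : ℝ)
        · exact ⟨H, hidx.trans htk, Or.inl hgood⟩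
        push_neg at hgood
        obtain ⟨i0, hbad⟩ := hgood
        obtain ⟨H'', hle, hidx'', hinc⟩ := increment hp ε hε (Ai i0) (hAipos i0) H hbad
        refine ⟨H'', ?_, Or.inr ?_⟩
        · have hppos := NeZero.pos p
          calc Nat.card ((Fin n → ZMod p) ⧸ H'')
              ≤ p ^ (Nat.card ((Fin n → ZMod p) ⧸ H)) * Nat.card ((Fin n → ZMod p) ⧸ H) :=
                hidx''
            _ ≤ p ^ (Nat.card ((Fin n → ZMod p) ⧸ H)) * 2 ^ (Nat.card ((Fin n → ZMod p) ⧸ H)) :=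
                Nat.mul_le_mul_left _ (Nat.lt_two_pow_self).le
            _ = (2 * p) ^ (Nat.card ((Fin n → ZMod p) ⧸ H)) := by
                rw [mul_pow]
                ring
            _ ≤ (2 * p) ^ (tower p k) := Nat.pow_le_pow_right (by omega) hidx
            _ = tower p (k + 1) := rfl
        · have hmono : ∀ j, _root_.dens p n (Ai j) H + (if j = i0 then ε ^ 3 else 0)
              ≤ _root_.dens p n (Ai j) H'' := by
            intro j
            by_cases hj : j = i0
            · subst hj
              rw [if_pos rfl]
              exact hinc
            · rw [if_neg hj, add_zero]
              exact dens_mono hle (Ai j)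
          have hsum : (∑ i, _root_.dens p n (Ai i) H) + ε ^ 3
              ≤ ∑ i, _root_.dens p n (Ai i) H'' := by
            calc (∑ i, _root_.dens p n (Ai i) H) + ε ^ 3
                = ∑ i, (_root_.dens p n (Ai i) H + (if i = i0 then ε ^ 3 else 0)) := by
                  rw [Finset.sum_add_distrib, Finset.sum_ite_eq' Finset.univ i0 (fun _ => ε ^ 3)]
                  simp
              _ ≤ _ := Finset.sum_le_sum (fun i _ => hmono i)
          push_cast
          push_cast at henergy
          linarith [hsum, henergy]
    obtain ⟨H, hidx, hcase⟩ := main T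
    refine ⟨H, hidx, ?_⟩
    rcases hcase with hgood | henergy
    · exact hgood
    exfalso
    have hcard' := Submodule.card_eq_card_quotient_mul_card H
    have hHN : ∀ v, (cardAH p n (↑R) H v : ℝ)
        ≤ 2 * R.card * (Nat.card H : ℝ) / (Fintype.card (Fin n → ZMod p) : ℝ) := by
      intro v
      apply hreg H v
      have h2 : Fintype.card (Fin n → ZMod p) ≤ Nat.card H * tower p T := by
        calc Fintype.card (Fin n → ZMod p) = Nat.card (Fin n → ZMod p) :=
            (Nat.card_eq_fintype_card).symm
          _ = Nat.card H * Nat.card ((Fin n → ZMod p) ⧸ H) := hcard'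
          _ ≤ Nat.card H * tower p T := Nat.mul_le_mul_left _ hidx
      have h1 : (Fintype.card (Fin n → ZMod p) : ℝ) ≤ (Nat.card H : ℝ) * tower p T := by
        exact_mod_cast h2
      rw [inv_mul_le_iff₀ htposR, mul_comm]
      exact h1
    have hupper := dens_upper hm α hα R A Ai H hHN hAR hcard hApos hdis hun hsize
    have hTle : 4 * (m : ℝ) ^ 2 * ε⁻¹ ^ 3 * α⁻¹ ^ 2 ≤ (T : ℝ) := by
      rw [hT]
      exact Nat.le_ceil _
    have heq : 4 * (m : ℝ) ^ 2 * ε⁻¹ ^ 3 * α⁻¹ ^ 2 * ε ^ 3 = 4 * (m : ℝ) ^ 2 / α ^ 2 := by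
      field_simp
    have hεα : 4 * (m : ℝ) ^ 2 / α ^ 2 ≤ (T : ℝ) * ε ^ 3 := by
      rw [← heq]
      exact mul_le_mul_of_nonneg_right hTle (le_of_lt (pow_pos hε 3))
    linarith [henergy, hupper, hεα]
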